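/- Let V be a finite-dimensional complex inner product space, let H₁, H₂ be positive-semidefinite self-adjoint operators on V, and let W = ker H₁. Suppose g > 0 is such that ⟨x, H₁ x⟩ ≥ g‖x‖² for every x orthogonal to W. Let 0 ≤ α < 1 and let ω ∈ V be a unit vector with ⟨ω, (H₁ + H₂) ω⟩ ≤ α g. Then there exists a unit vector η ∈ W such that |⟨ω, η⟩|² ≥ 1 − α. -/

import Mathlib

open scoped InnerProductSpace

/-- **Lemma (Step one).** If `H₁, H₂` are positive-semidefinite self-adjoint operators,
`H₁` has spectral gap at least `g` (i.e. `⟨x, H₁ x⟩ ≥ g‖x‖²` for `x ⟂ ker H₁`), and `ω` is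
a unit vector with energy `⟨ω, (H₁ + H₂) ω⟩ ≤ α g` for some `0 ≤ α < 1`, then there is a
unit vector `η ∈ ker H₁` with `|⟨ω, η⟩|² ≥ 1 − α`. -/
theorem step_one
    {V : Type*} [NormedAddCommGroup V] [InnerProductSpace ℂ V] [FiniteDimensional ℂ V]
    (H₁ H₂ : V →ₗ[ℂ] V)
    (hH₁_sa : ∀ x y : V, ⟪H₁ x, y⟫_ℂ = ⟪x, H₁ y⟫_ℂ)
    (hH₂_sa : ∀ x y : V, ⟪H₂ x, y⟫_ℂ = ⟪x, H₂ y⟫_ℂ)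
    (hH₁_pos : ∀ x : V, 0 ≤ (⟪x, H₁ x⟫_ℂ).re)
    (hH₂_pos : ∀ x : V, 0 ≤ (⟪x, H₂ x⟫_ℂ).re)
    (g : ℝ) (hg : 0 < g)
    (hgap : ∀ x ∈ (LinearMap.ker H₁)ᗮ, g * ‖x‖ ^ 2 ≤ (⟪x, H₁ x⟫_ℂ).re)
    (α : ℝ) (hα₀ : 0 ≤ α) (hα₁ : α < 1)
    (ω : V) (hω : ‖ω‖ = 1)
    (henergy : (⟪ω, (H₁ + H₂) ω⟫_ℂ).re ≤ α * g) :
    ∃ η ∈ LinearMap.ker H₁, ‖η‖ = 1 ∧ 1 - α ≤ ‖⟪ω, η⟫_ℂ‖ ^ 2 := by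
  classical
  set K : Submodule ℂ V := LinearMap.ker H₁ with hK
  set w : V := (K.orthogonalProjection ω : V) with hw
  have hwK : w ∈ K := (K.orthogonalProjection ω).2
  have hperp : ω - w ∈ Kᗮ := by
    rw [hw, K.coe_orthogonalProjection_apply]; exact K.sub_starProjection_mem_orthogonal ω
  -- energy of ω under H₁ is at most α g
  have hE1 : (⟪ω, H₁ ω⟫_ℂ).re ≤ α * g := by
    have h := henergy
    rw [LinearMap.add_apply, inner_add_right] at h
    have := hH₂_pos ω
    simp only [Complex.add_re] at h
    linarith
  -- ⟪ω, H₁ ω⟫ = ⟪ω - w, H₁ (ω - w)⟫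
  have hker : H₁ w = 0 := hwK
  have hEeq : ⟪ω, H₁ ω⟫_ℂ = ⟪ω - w, H₁ (ω - w)⟫_ℂ := by
    have h1 : H₁ (ω - w) = H₁ ω := by rw [map_sub, hker, sub_zero]
    rw [h1, inner_sub_left, ← hH₁_sa w ω, hker, inner_zero_left, sub_zero]
  -- gap bound on ω - w
  have hgap' : g * ‖ω - w‖ ^ 2 ≤ α * g := by
    calc g * ‖ω - w‖ ^ 2 ≤ (⟪ω - w, H₁ (ω - w)⟫_ℂ).re := hgap _ hperp
      _ = (⟪ω, H₁ ω⟫_ℂ).re := by rw [hEeq]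
      _ ≤ α * g := hE1
  have hperp_sq : ‖ω - w‖ ^ 2 ≤ α := by
    by_contra hc
    push_neg at hc
    nlinarith
  -- Pythagoras: ‖w‖² + ‖ω - w‖² = 1
  have hpyth : ‖w‖ ^ 2 + ‖ω - w‖ ^ 2 = 1 := by
    have hinner : ⟪w, ω - w⟫_ℂ = 0 := by
      exact (Submodule.mem_orthogonal K (ω - w)).mp hperp w hwK
    have := norm_add_sq (𝕜 := ℂ) w (ω - w)
    rw [hinner] at this
    simp only [map_zero, mul_zero, add_zero] at this
    have h2 : w + (ω - w) = ω := by abel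
    rw [h2, hω] at this
    linarith
  have hw_sq : 1 - α ≤ ‖w‖ ^ 2 := by linarith
  have hw_pos : 0 < ‖w‖ := by
    nlinarith [sq_nonneg ‖w‖, norm_nonneg w, sq_abs ‖w‖]
  refine ⟨(‖w‖ : ℂ)⁻¹ • w, ?_, ?_, ?_⟩
  · exact K.smul_mem _ hwK
  · rw [norm_smul]
    simp [norm_inv, hw_pos.ne']
  · have hiw : ⟪ω, w⟫_ℂ = (‖w‖ ^ 2 : ℝ) := by
      have : ⟪ω, w⟫_ℂ = ⟪w + (ω - w), w⟫_ℂ := by congr 1; abel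
      rw [this, inner_add_left]
      have h0 : ⟪ω - w, w⟫_ℂ = 0 := by
        exact (Submodule.mem_orthogonal' K (ω - w)).mp hperp w hwK
      rw [h0, add_zero, inner_self_eq_norm_sq_to_K]
      norm_cast
    rw [inner_smul_right, hiw]
    rw [norm_mul]
    have : ‖((‖w‖ : ℂ))⁻¹‖ = ‖w‖⁻¹ := by simp
    rw [this]
    have h2 : ‖((‖w‖ ^ 2 : ℝ) : ℂ)‖ = ‖w‖ ^ 2 := by
      rw [Complex.norm_real, Real.norm_eq_abs, abs_of_nonneg (sq_nonneg _)]
    rw [h2]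
    have : ‖w‖⁻¹ * ‖w‖ ^ 2 = ‖w‖ := by field_simp
    rw [this]
    linarith
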